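/- arXiv:2105.05223 — 5 statements merged into one kernel-verified Lean document; each statement's English description precedes it below -/
import Mathlib

section
/- Let R be a commutative ring, G a group, F a family of subgroups of G, and S a G-set all of whose point stabilizers belong to F. Then the RG-module R[S] (the free R-module on S, with G acting by permuting the basis) is relatively F-projective: for every F-strongly surjective G-equivariant map p : A → B of RG-modules and every G-equivariant R-linear map φ : R[S] → B, there exists a G-equivariant R-linear map Φ : R[S] → A with p ∘ Φ = φ. -/
open scoped BigOperators

universe u v w

namespace RelBdd

variable {G : Type u} [Group G]

/-- `F` is a family of subgroups of `G`: nonempty, closed under conjugation and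
closed under taking subgroups. -/
def IsFamily (F : Set (Subgroup G)) : Prop :=
  F.Nonempty ∧
    (∀ H ∈ F, ∀ g : G, Subgroup.map ((MulAut.conj g).toMonoidHom) H ∈ F) ∧
    ∀ H ∈ F, ∀ K : Subgroup G, K ≤ H → K ∈ F

/-- The `G`-set `G/F = ⨿_{H ∈ F} G/H`. -/
abbrev Cos (G : Type u) [Group G] (F : Set (Subgroup G)) : Type u :=
  Σ H : F, G ⧸ (H : Subgroup G)

instance (F : Set (Subgroup G)) : SMul G (Cos G F) :=
  ⟨fun g x => ⟨x.1, g • x.2⟩⟩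

instance (F : Set (Subgroup G)) : MulAction G (Cos G F) where
  one_smul := by
    rintro ⟨H, q⟩
    show (⟨H, (1 : G) • q⟩ : Cos G F) = ⟨H, q⟩
    rw [one_smul]
  mul_smul g h := by
    rintro ⟨H, q⟩
    show (⟨H, (g * h) • q⟩ : Cos G F) = ⟨H, g • h • q⟩
    rw [mul_smul]

/-- A function into a normed space is bounded. -/
def Bdd {α : Type*} {V : Type*} [Norm V] (f : α → V) : Prop :=
  ∃ C : ℝ, ∀ x, ‖f x‖ ≤ C

/-- The simplicial coboundary operator on `V`-valued cochains on a set `S`. -/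
def delta {S : Type*} {V : Type*} [AddCommGroup V] [Module ℝ V] (n : ℕ)
    (f : (Fin (n + 1) → S) → V) : (Fin (n + 2) → S) → V :=
  fun x => ∑ i : Fin (n + 2), ((-1 : ℝ) ^ (i : ℕ)) • f (fun j => x (i.succAbove j))

/-- `ℓ∞(S)`: the space of bounded real valued functions on `S`. -/
def Linf (S : Type v) : Submodule ℝ (S → ℝ) where
  carrier := {f | ∃ C : ℝ, ∀ s, |f s| ≤ C}
  add_mem' := by
    rintro f g ⟨C, hC⟩ ⟨D, hD⟩
    exact ⟨C + D, fun s => (abs_add_le _ _).trans (add_le_add (hC s) (hD s))⟩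
  zero_mem' := ⟨0, fun s => by simp⟩
  smul_mem' := by
    rintro r f ⟨C, hC⟩
    refine ⟨|r| * C, fun s => ?_⟩
    show |r * f s| ≤ |r| * C
    rw [abs_mul]
    exact mul_le_mul_of_nonneg_left (hC s) (abs_nonneg r)

/-- The constant function `r` as an element of `ℓ∞(S)`. -/
def constLinf (S : Type v) (r : ℝ) : Linf S :=
  ⟨fun _ => r, ⟨|r|, fun _ => le_rfl⟩⟩

/-- Precomposition with a map `φ : S → S` as a linear endomorphism of `ℓ∞(S)`. -/
def compL {S : Type v} (φ : S → S) : Linf S →ₗ[ℝ] Linf S where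
  toFun f := ⟨fun s => (f : S → ℝ) (φ s), by
    obtain ⟨C, hC⟩ := f.2
    exact ⟨C, fun s => hC (φ s)⟩⟩
  map_add' f g := by ext s; rfl
  map_smul' r f := by ext s; rfl

/-- There exists a `K`-invariant mean on the `K`-set `S`. -/
def InvariantMean (K : Type u) (S : Type v) [Group K] [MulAction K S] : Prop :=
  ∃ m : Linf S →ₗ[ℝ] ℝ,
    m (constLinf S 1) = 1 ∧
    (∀ f : Linf S, (∀ s, 0 ≤ (f : S → ℝ) s) → 0 ≤ m f) ∧
    ∀ (g : K) (f : Linf S), m (compL (fun s => g⁻¹ • s) f) = m f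

/-- The restriction `F|_H = {L ∩ H : L ∈ F}` of a collection of subgroups of `G` to
a collection of subgroups of `H`. -/
def restrictedFamily (F : Set (Subgroup G)) (H : Subgroup G) : Set (Subgroup H) :=
  {K | ∃ L ∈ F, K = L.subgroupOf H}

/-- `K` is amenable relative to the collection `𝒦` of its subgroups: the `K`-set
`⨿_{L ∈ 𝒦} K/L` admits a `K`-invariant mean. -/
def RelativelyAmenable (K : Type u) [Group K] (𝒦 : Set (Subgroup K)) : Prop :=
  InvariantMean K (Cos K 𝒦)

/-- The family generated by a set `ℋ` of subgroups: all subgroups of conjugates of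
members of `ℋ`, together with the trivial subgroup. -/
def famGen (ℋ : Set (Subgroup G)) : Set (Subgroup G) :=
  {K | K = ⊥ ∨ ∃ H ∈ ℋ, ∃ g : G, ∀ x ∈ K, g⁻¹ * x * g ∈ H}

/-- The left multiplication action of `g ∈ G` on a normed `ℝG`-module `W`, as a
continuous linear map. -/
def smulCLM {W : Type w} [NormedAddCommGroup W] [NormedSpace ℝ W] [DistribMulAction G W]
    [SMulCommClass G ℝ W] (hW : ∀ (g : G) (w : W), ‖g • w‖ = ‖w‖) (g : G) : W →L[ℝ] W :=
  LinearMap.mkContinuous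
    { toFun := fun w => g • w
      map_add' := fun a b => smul_add g a b
      map_smul' := fun r w => smul_comm g r w }
    1 (fun w => by simp [hW])

/-- If `S` is a `G`-set whose point stabilizers all belong to the
family `F`, then the `RG`-module `R[S]` (with `G` permuting the basis) is relatively
`F`-projective: every `G`-equivariant map from it lifts along any `F`-strongly
surjective `G`-equivariant map `p : A → B` of `RG`-modules. -/
theorem free_module_relatively_projective (R : Type w) [CommRing R]
    (G : Type u) [Group G] (F : Set (Subgroup G)) (hF : IsFamily F)
    (S : Type v) [MulAction G S] (hS : ∀ s : S, MulAction.stabilizer G s ∈ F)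
    (A : Type w) [AddCommGroup A] [Module R A] [DistribMulAction G A] [SMulCommClass G R A]
    (B : Type w) [AddCommGroup B] [Module R B] [DistribMulAction G B] [SMulCommClass G R B]
    (p : A →ₗ[R] B) (hp : ∀ (g : G) (a : A), p (g • a) = g • p a)
    (hstrong : ∀ H ∈ F, ∃ τ : B →ₗ[R] A,
      (∀ h : G, h ∈ H → ∀ b, τ (h • b) = h • τ b) ∧ ∀ b, p (τ b) = b)
    (φ : (S →₀ R) →ₗ[R] B)
    (hφ : ∀ (g : G) (x : S →₀ R), φ (Finsupp.mapDomain (fun s => g • s) x) = g • φ x) :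
    ∃ Φ : (S →₀ R) →ₗ[R] A,
      (∀ (g : G) (x : S →₀ R), Φ (Finsupp.mapDomain (fun s => g • s) x) = g • Φ x) ∧
      ∀ x, p (Φ x) = φ x := by
  classical
  let rep : Quotient (MulAction.orbitRel G S) → S := Quotient.out
  have hrep : ∀ s : S, ∃ g : G, g • rep ⟦s⟧ = s := by
    intro s
    have h : MulAction.orbitRel G S (rep ⟦s⟧) s := Quotient.exact (Quotient.out_eq ⟦s⟧)
    obtain ⟨g, hg⟩ := MulAction.orbitRel_apply.mp h
    exact ⟨g⁻¹, by rw [← hg]; simp⟩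
  choose τ hτeq hτsec using
    fun c : Quotient (MulAction.orbitRel G S) =>
      hstrong (MulAction.stabilizer G (rep c)) (hS (rep c))
  let v : Quotient (MulAction.orbitRel G S) → A :=
    fun c => τ c (φ (Finsupp.single (rep c) 1))
  have key : ∀ (c : Quotient (MulAction.orbitRel G S)) (g g' : G),
      g • rep c = g' • rep c → g • v c = g' • v c := by
    intro c g g' h
    have hm : g'⁻¹ * g ∈ MulAction.stabilizer G (rep c) := by
      rw [MulAction.mem_stabilizer_iff, mul_smul, h, ← mul_smul, inv_mul_cancel, one_smul]
    have hfix : (g'⁻¹ * g) • v c = v c := by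
      have h1 : (g'⁻¹ * g) • φ (Finsupp.single (rep c) (1 : R))
          = φ (Finsupp.single (rep c) 1) := by
        rw [← hφ, Finsupp.mapDomain_single, MulAction.mem_stabilizer_iff.mp hm]
      show (g'⁻¹ * g) • τ c (φ (Finsupp.single (rep c) 1)) = _
      rw [← hτeq c _ hm, h1]
    calc g • v c = g' • ((g'⁻¹ * g) • v c) := by rw [← mul_smul, mul_inv_cancel_left]
      _ = g' • v c := by rw [hfix]
  let f : S → A := fun s => (hrep s).choose • v ⟦s⟧
  have hf : ∀ (s : S) (g : G), g • rep ⟦s⟧ = s → f s = g • v ⟦s⟧ := by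
    intro s g hg
    exact key ⟦s⟧ _ g ((hrep s).choose_spec.trans hg.symm)
  have hfequiv : ∀ (g : G) (s : S), f (g • s) = g • f s := by
    intro g s
    have hq : (⟦g • s⟧ : Quotient (MulAction.orbitRel G S)) = ⟦s⟧ :=
      Quotient.sound ⟨g, rfl⟩
    have h2 : f (g • s) = (g * (hrep s).choose) • v ⟦g • s⟧ := by
      apply hf
      rw [hq, mul_smul, (hrep s).choose_spec]
    rw [h2, hq, mul_smul]
  have hfp : ∀ s : S, p (f s) = φ (Finsupp.single s 1) := by
    intro s
    have hg := (hrep s).choose_spec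
    have h1 := hφ (hrep s).choose (Finsupp.single (rep ⟦s⟧) 1)
    rw [Finsupp.mapDomain_single, hg] at h1
    show p ((hrep s).choose • v ⟦s⟧) = _
    rw [hp, hτsec, ← h1]
  refine ⟨Finsupp.linearCombination R f, ?_, ?_⟩
  · intro g x
    induction x using Finsupp.induction_linear with
    | zero => simp
    | add a b ha hb =>
        rw [Finsupp.mapDomain_add, map_add, ha, hb, map_add, smul_add]
    | single s r =>
        rw [Finsupp.mapDomain_single, Finsupp.linearCombination_single,
          Finsupp.linearCombination_single, hfequiv]
        exact (smul_comm g r (f s)).symm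
  · intro x
    induction x using Finsupp.induction_linear with
    | zero => simp
    | add a b ha hb => rw [map_add, map_add, ha, hb, map_add]
    | single s r =>
        rw [Finsupp.linearCombination_single, map_smul, hfp,
          ← map_smul, Finsupp.smul_single_one]


end RelBdd
end

section
/- Let G be a group, F a family of subgroups of G, S a G-set all of whose point stabilizers belong to F, and V a normed ℝG-module. Let B(S,V) denote the normed ℝG-module of bounded functions S → V with the supremum norm and the action (g·f)(s) = g·f(g⁻¹·s). Then B(S,V) is relatively F-injective: for every F-strongly injective G-equivariant bounded linear map i : A → B of normed ℝG-modules and every G-equivariant bounded linear map ψ : A → B(S,V), there exists a G-equivariant bounded linear map Ψ : B → B(S,V) with Ψ ∘ i = ψ. -/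
open scoped BigOperators

universe u v w

namespace RelBdd

variable {G : Type u} [Group G]

/-- If `S` is a `G`-set whose point stabilizers all belong to the
family `F` and `V` is a normed `ℝG`-module, then the normed `ℝG`-module `B(S,V)` of
bounded functions `S → V` (sup norm, action `(g • f) s = g • f (g⁻¹ • s)`) is
relatively `F`-injective. -/
theorem bounded_functions_relatively_injective (G : Type u) [Group G]
    (F : Set (Subgroup G)) (hF : IsFamily F)
    (S : Type v) [MulAction G S] (hS : ∀ s : S, MulAction.stabilizer G s ∈ F)
    (V : Type w) [NormedAddCommGroup V] [NormedSpace ℝ V] [DistribMulAction G V]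
    [SMulCommClass G ℝ V] (hV : ∀ (g : G) (v : V), ‖g • v‖ = ‖v‖)
    (A : Type w) [NormedAddCommGroup A] [NormedSpace ℝ A] [DistribMulAction G A]
    [SMulCommClass G ℝ A] (hA : ∀ (g : G) (a : A), ‖g • a‖ = ‖a‖)
    (B : Type w) [NormedAddCommGroup B] [NormedSpace ℝ B] [DistribMulAction G B]
    [SMulCommClass G ℝ B] (hB : ∀ (g : G) (b : B), ‖g • b‖ = ‖b‖)
    (i : A →L[ℝ] B) (hi : ∀ (g : G) (a : A), i (g • a) = g • i a)
    (hstrong : ∃ K : ℝ, 0 ≤ K ∧ ∀ H ∈ F, ∃ σ : B →L[ℝ] A,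
      ‖σ‖ ≤ K ∧ (∀ h : G, h ∈ H → ∀ b, σ (h • b) = h • σ b) ∧ ∀ a, σ (i a) = a)
    (ψ : A →ₗ[ℝ] (S → V))
    (hψbdd : ∃ C : ℝ, ∀ (a : A) (s : S), ‖ψ a s‖ ≤ C * ‖a‖)
    (hψequiv : ∀ (g : G) (a : A) (s : S), ψ (g • a) s = g • ψ a (g⁻¹ • s)) :
    ∃ Ψ : B →ₗ[ℝ] (S → V),
      (∃ C : ℝ, ∀ (b : B) (s : S), ‖Ψ b s‖ ≤ C * ‖b‖) ∧
      (∀ (g : G) (b : B) (s : S), Ψ (g • b) s = g • Ψ b (g⁻¹ • s)) ∧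
      ∀ a, Ψ (i a) = ψ a := by
  classical
  obtain ⟨K, hK0, hσ⟩ := hstrong
  obtain ⟨C, hC⟩ := hψbdd
  -- chosen section for each stabilizer
  have hσ' : ∀ s : S, ∃ σ : B →L[ℝ] A, ‖σ‖ ≤ K ∧
      (∀ h : G, h ∈ MulAction.stabilizer G s → ∀ b, σ (h • b) = h • σ b) ∧
      ∀ a, σ (i a) = a := fun s => hσ _ (hS s)
  set σf : S → (B →L[ℝ] A) := fun s => (hσ' s).choose with hσfdef
  have hσf1 : ∀ s, ‖σf s‖ ≤ K := fun s => (hσ' s).choose_spec.1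
  have hσf2 : ∀ s, ∀ h : G, h ∈ MulAction.stabilizer G s → ∀ b,
      σf s (h • b) = h • σf s b := fun s => (hσ' s).choose_spec.2.1
  have hσf3 : ∀ s a, σf s (i a) = a := fun s => (hσ' s).choose_spec.2.2
  -- orbit representatives
  set rep : S → S := fun s => (Quotient.mk (MulAction.orbitRel G S) s).out with hrepdef
  have hrep_orbit : ∀ s, rep s ∈ MulAction.orbit G s := fun s =>
    MulAction.orbitRel_apply.mp (Quotient.exact (Quotient.out_eq _))
  have hex : ∀ s : S, ∃ g : G, g • s = rep s := fun s =>
    MulAction.mem_orbit_iff.mp (hrep_orbit s)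
  set t : S → G := fun s => ((hex s).choose)⁻¹ with htdef
  have ht : ∀ s, t s • rep s = s := by
    intro s
    have h := (hex s).choose_spec
    calc t s • rep s = ((hex s).choose)⁻¹ • ((hex s).choose • s) := by rw [h]
      _ = s := inv_smul_smul _ _
  have hrep_smul : ∀ (g : G) (s : S), rep (g • s) = rep s := by
    intro g s
    have : (Quotient.mk (MulAction.orbitRel G S) (g • s)) =
        Quotient.mk (MulAction.orbitRel G S) s := Quotient.sound ⟨g, rfl⟩
    rw [hrepdef]
    simp only [this]
  -- key well-definedness lemma
  have key : ∀ (r : S) (g1 g2 : G), g1 • r = g2 • r → ∀ b : B,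
      g1 • ψ (σf r (g1⁻¹ • b)) r = g2 • ψ (σf r (g2⁻¹ • b)) r := by
    intro r g1 g2 hg b
    have hh : (g2⁻¹ * g1) ∈ MulAction.stabilizer G r := by
      rw [MulAction.mem_stabilizer_iff, mul_smul, hg, inv_smul_smul]
    have h1 : g1⁻¹ • b = (g2⁻¹ * g1)⁻¹ • (g2⁻¹ • b) := by
      rw [← mul_smul]
      congr 1
      group
    rw [h1, hσf2 r _ (inv_mem hh), hψequiv, inv_inv, hh, ← mul_smul]
    congr 1
    group
  -- the extension
  refine ⟨{ toFun := fun b s => t s • ψ (σf (rep s) ((t s)⁻¹ • b)) (rep s)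
            map_add' := ?_
            map_smul' := ?_ }, ?_, ?_, ?_⟩
  · intro b c
    funext s
    simp only [smul_add, map_add, Pi.add_apply]
  · intro c b
    funext s
    simp only [RingHom.id_apply, Pi.smul_apply]
    rw [smul_comm ((t s)⁻¹) c b, map_smul, map_smul, Pi.smul_apply,
      smul_comm (t s) c]
  · -- boundedness
    refine ⟨max C 0 * K, fun b s => ?_⟩
    simp only [LinearMap.coe_mk, AddHom.coe_mk]
    rw [hV]
    calc ‖ψ (σf (rep s) ((t s)⁻¹ • b)) (rep s)‖
        ≤ C * ‖σf (rep s) ((t s)⁻¹ • b)‖ := hC _ _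
      _ ≤ max C 0 * ‖σf (rep s) ((t s)⁻¹ • b)‖ := by
          apply mul_le_mul_of_nonneg_right (le_max_left _ _) (norm_nonneg _)
      _ ≤ max C 0 * (K * ‖(t s)⁻¹ • b‖) := by
          apply mul_le_mul_of_nonneg_left _ (le_max_right _ _)
          calc ‖σf (rep s) ((t s)⁻¹ • b)‖
              ≤ ‖σf (rep s)‖ * ‖(t s)⁻¹ • b‖ := (σf (rep s)).le_opNorm _
            _ ≤ K * ‖(t s)⁻¹ • b‖ :=
                mul_le_mul_of_nonneg_right (hσf1 _) (norm_nonneg _)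
      _ = max C 0 * K * ‖b‖ := by rw [hB]; ring
  · -- equivariance
    intro g b s
    simp only [LinearMap.coe_mk, AddHom.coe_mk]
    rw [hrep_smul g⁻¹ s]
    have h2 : (g * t (g⁻¹ • s)) • rep s = t s • rep s := by
      rw [ht s, mul_smul]
      conv_lhs => rw [← hrep_smul g⁻¹ s]
      rw [ht, smul_inv_smul]
    have h3 := key (rep s) (t s) (g * t (g⁻¹ • s)) h2.symm (g • b)
    have h4 : (g * t (g⁻¹ • s))⁻¹ • g • b = (t (g⁻¹ • s))⁻¹ • b := by
      rw [← mul_smul]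
      congr 1
      group
    rw [h3, h4, mul_smul]
  · -- extension property
    intro a
    funext s
    simp only [LinearMap.coe_mk, AddHom.coe_mk]
    have : (t s)⁻¹ • i a = i ((t s)⁻¹ • a) := (hi _ _).symm
    rw [this, hσf3, hψequiv, smul_inv_smul, inv_inv, ht]


end RelBdd
end

section
/- Let R be a commutative ring, G a group, F a family of subgroups of G, and f : V → W a G-equivariant R-linear map of RG-modules. Let (P_*, ∂^P) be a nonnegatively graded chain complex of RG-modules with G-equivariant augmentation ε_P : P₀ → V such that each P_n is relatively F-projective, and let (C_*, ∂^C) together with a G-equivariant augmentation ε_C : C₀ → W be an F-strong resolution of W: the augmented complex is exact and for each H ∈ F there exist H-equivariant R-linear maps k^H_n : C_n → C_{n+1} (with C_{−1} = W) satisfying ∂^C_{n+1} ∘ k^H_n + k^H_{n−1} ∘ ∂^C_n = id. Then there exists a G-equivariant chain map f_* : P_* → C_* with ε_C ∘ f₀ = f ∘ ε_P, and any two such chain maps are G-equivariantly chain homotopic. -/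
open scoped BigOperators

universe u v w

namespace RelBdd

variable {G : Type u} [Group G]

section Statement6

/-- An `RG`-module `P` is relatively `F`-projective: every `G`-equivariant map from
`P` lifts along any `F`-strongly surjective `G`-equivariant map of `RG`-modules. -/
def IsRelativelyProjective (R : Type w) [CommRing R] (G : Type u) [Group G]
    (F : Set (Subgroup G)) (P : Type w) [AddCommGroup P] [Module R P]
    [DistribMulAction G P] [SMulCommClass G R P] : Prop :=
  ∀ (A B : Type w) [AddCommGroup A] [Module R A] [DistribMulAction G A] [SMulCommClass G R A]
    [AddCommGroup B] [Module R B] [DistribMulAction G B] [SMulCommClass G R B],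
    ∀ p : A →ₗ[R] B, (∀ (g : G) (a : A), p (g • a) = g • p a) →
    (∀ H ∈ F, ∃ τ : B →ₗ[R] A,
      (∀ h : G, h ∈ H → ∀ b, τ (h • b) = h • τ b) ∧ ∀ b, p (τ b) = b) →
    ∀ φ : P →ₗ[R] B, (∀ (g : G) (x : P), φ (g • x) = g • φ x) →
    ∃ Φ : P →ₗ[R] A, (∀ (g : G) (x : P), Φ (g • x) = g • Φ x) ∧ ∀ x, p (Φ x) = φ x

/-- The `G`-action on a `G`-invariant submodule. -/
def subSMul {R : Type w} [CommRing R] {G : Type u} [Group G]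
    {M : Type w} [AddCommGroup M] [Module R M] [DistribMulAction G M]
    (Z : Submodule R M) (hZ : ∀ (g : G) (x : M), x ∈ Z → g • x ∈ Z) :
    DistribMulAction G Z where
  smul g x := ⟨g • (x : M), hZ g x x.2⟩
  one_smul x := Subtype.ext (one_smul G (x : M))
  mul_smul g h x := Subtype.ext (mul_smul g h (x : M))
  smul_zero g := Subtype.ext (smul_zero g)
  smul_add g a b := Subtype.ext (smul_add g (a : M) (b : M))

theorem lift_aux (R : Type w) [CommRing R] (G : Type u) [Group G] (F : Set (Subgroup G))
    (Q A B : Type w)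
    [AddCommGroup Q] [Module R Q] [DistribMulAction G Q] [SMulCommClass G R Q]
    [AddCommGroup A] [Module R A] [DistribMulAction G A] [SMulCommClass G R A]
    [AddCommGroup B] [Module R B] [DistribMulAction G B] [SMulCommClass G R B]
    (hQ : IsRelativelyProjective R G F Q)
    (p : A →ₗ[R] B) (hp : ∀ (g : G) (a : A), p (g • a) = g • p a)
    (Z : Submodule R B) (hZ : ∀ (g : G) (b : B), b ∈ Z → g • b ∈ Z)
    (hsec : ∀ H ∈ F, ∃ τ : B →ₗ[R] A,
      (∀ h : G, h ∈ H → ∀ b, τ (h • b) = h • τ b) ∧ ∀ b ∈ Z, p (τ b) = b)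
    (ψ : Q →ₗ[R] B) (hψ : ∀ (g : G) (x : Q), ψ (g • x) = g • ψ x)
    (hψZ : ∀ x, ψ x ∈ Z) :
    ∃ Ψ : Q →ₗ[R] A, (∀ (g : G) (x : Q), Ψ (g • x) = g • Ψ x) ∧ ∀ x, p (Ψ x) = ψ x := by
  classical
  set A' : Submodule R A := Submodule.comap p Z with hA'def
  have hA'g : ∀ (g : G) (a : A), a ∈ A' → g • a ∈ A' := by
    intro g a ha
    simp only [hA'def, Submodule.mem_comap] at ha ⊢
    rw [hp]; exact hZ g _ ha
  letI : DistribMulAction G A' := subSMul A' hA'g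
  letI : SMulCommClass G R A' := ⟨fun g r x => Subtype.ext (smul_comm g r (x : A))⟩
  letI : DistribMulAction G Z := subSMul Z hZ
  letI : SMulCommClass G R Z := ⟨fun g r x => Subtype.ext (smul_comm g r (x : B))⟩
  let p' : A' →ₗ[R] Z := p.restrict (fun x hx => hx)
  have hp' : ∀ (g : G) (a : A'), p' (g • a) = g • p' a := fun g a => Subtype.ext (hp g (a : A))
  have hsec' : ∀ H ∈ F, ∃ τ : Z →ₗ[R] A',
      (∀ h : G, h ∈ H → ∀ b, τ (h • b) = h • τ b) ∧ ∀ b, p' (τ b) = b := by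
    intro H hH
    obtain ⟨τ, hτeq, hτ⟩ := hsec H hH
    refine ⟨τ.restrict (fun b hb => ?_), fun h hh b => Subtype.ext (hτeq h hh (b : B)),
      fun b => Subtype.ext (hτ (b : B) b.2)⟩
    · show p (τ b) ∈ Z
      rw [hτ b hb]; exact hb
  obtain ⟨Φ, hΦeq, hΦ⟩ := hQ A' Z p' hp' hsec' (ψ.codRestrict Z hψZ)
    (fun g x => Subtype.ext (hψ g x))
  exact ⟨A'.subtype ∘ₗ Φ, fun g x => congrArg Subtype.val (hΦeq g x),
    fun x => congrArg Subtype.val (hΦ x)⟩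

/-- fundamental lemma, projective side.  Given a `G`-equivariant
map `f : V → W`, a nonnegatively graded complex `P_*` of relatively `F`-projective
`RG`-modules augmented over `V`, and an `F`-strong resolution `C_* → W`, there is a
`G`-equivariant chain map `P_* → C_*` extending `f`, unique up to `G`-equivariant
chain homotopy. -/
theorem fundamental_lemma_projective (R : Type w) [CommRing R]
    (G : Type u) [Group G] (F : Set (Subgroup G)) (hF : IsFamily F)
    (V W : Type w)
    [AddCommGroup V] [Module R V] [DistribMulAction G V] [SMulCommClass G R V]
    [AddCommGroup W] [Module R W] [DistribMulAction G W] [SMulCommClass G R W]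
    (f : V →ₗ[R] W) (hf : ∀ (g : G) (v : V), f (g • v) = g • f v)
    -- the complex `P_*` of relatively `F`-projective modules, augmented over `V`
    (P : ℕ → Type w)
    [∀ n, AddCommGroup (P n)] [∀ n, Module R (P n)]
    [∀ n, DistribMulAction G (P n)] [∀ n, SMulCommClass G R (P n)]
    (dP : ∀ n, P (n + 1) →ₗ[R] P n) (εP : P 0 →ₗ[R] V)
    (hdPsq : ∀ (n : ℕ) (x : P (n + 2)), dP n (dP (n + 1) x) = 0)
    (hεPsq : ∀ x : P 1, εP (dP 0 x) = 0)
    (hdPequiv : ∀ (n : ℕ) (g : G) (x : P (n + 1)), dP n (g • x) = g • dP n x)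
    (hεPequiv : ∀ (g : G) (x : P 0), εP (g • x) = g • εP x)
    (hPproj : ∀ n, IsRelativelyProjective R G F (P n))
    -- the `F`-strong resolution `C_* → W`
    (C : ℕ → Type w)
    [∀ n, AddCommGroup (C n)] [∀ n, Module R (C n)]
    [∀ n, DistribMulAction G (C n)] [∀ n, SMulCommClass G R (C n)]
    (dC : ∀ n, C (n + 1) →ₗ[R] C n) (εC : C 0 →ₗ[R] W)
    (hdCsq : ∀ (n : ℕ) (x : C (n + 2)), dC n (dC (n + 1) x) = 0)
    (hεCsq : ∀ x : C 1, εC (dC 0 x) = 0)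
    (hdCequiv : ∀ (n : ℕ) (g : G) (x : C (n + 1)), dC n (g • x) = g • dC n x)
    (hεCequiv : ∀ (g : G) (x : C 0), εC (g • x) = g • εC x)
    (hsurj : Function.Surjective εC)
    (hexact0 : Function.Exact (dC 0) εC)
    (hexact : ∀ n, Function.Exact (dC (n + 1)) (dC n))
    (hstrong : ∀ H ∈ F, ∃ (k : ∀ n, C n →ₗ[R] C (n + 1)) (km : W →ₗ[R] C 0),
      (∀ (n : ℕ) (h : G), h ∈ H → ∀ x, k n (h • x) = h • k n x) ∧
      (∀ h : G, h ∈ H → ∀ w, km (h • w) = h • km w) ∧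
      (∀ w, εC (km w) = w) ∧
      (∀ x : C 0, dC 0 (k 0 x) + km (εC x) = x) ∧
      ∀ (n : ℕ) (x : C (n + 1)), dC (n + 1) (k (n + 1) x) + k n (dC n x) = x) :
    -- existence of a `G`-equivariant chain map extending `f`
    (∃ fs : ∀ n, P n →ₗ[R] C n,
      (∀ (n : ℕ) (g : G) (x : P n), fs n (g • x) = g • fs n x) ∧
      (∀ x : P 0, εC (fs 0 x) = f (εP x)) ∧
      ∀ (n : ℕ) (x : P (n + 1)), dC n (fs (n + 1) x) = fs n (dP n x)) ∧
    -- uniqueness up to `G`-equivariant chain homotopy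
    ∀ fs fs' : ∀ n, P n →ₗ[R] C n,
      ((∀ (n : ℕ) (g : G) (x : P n), fs n (g • x) = g • fs n x) ∧
        (∀ x : P 0, εC (fs 0 x) = f (εP x)) ∧
        ∀ (n : ℕ) (x : P (n + 1)), dC n (fs (n + 1) x) = fs n (dP n x)) →
      ((∀ (n : ℕ) (g : G) (x : P n), fs' n (g • x) = g • fs' n x) ∧
        (∀ x : P 0, εC (fs' 0 x) = f (εP x)) ∧
        ∀ (n : ℕ) (x : P (n + 1)), dC n (fs' (n + 1) x) = fs' n (dP n x)) →
      ∃ h : ∀ n, P n →ₗ[R] C (n + 1),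
        (∀ (n : ℕ) (g : G) (x : P n), h n (g • x) = g • h n x) ∧
        (∀ x : P 0, fs 0 x - fs' 0 x = dC 0 (h 0 x)) ∧
        ∀ (n : ℕ) (x : P (n + 1)),
          fs (n + 1) x - fs' (n + 1) x = dC (n + 1) (h (n + 1) x) + h n (dP n x) := by

  classical
  have hkerε : ∀ (g : G) (b : C 0), b ∈ LinearMap.ker εC → g • b ∈ LinearMap.ker εC := by
    intro g b hb
    simp only [LinearMap.mem_ker] at hb ⊢
    rw [hεCequiv, hb, smul_zero]
  have hkerd : ∀ (n : ℕ) (g : G) (b : C (n + 1)),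
      b ∈ LinearMap.ker (dC n) → g • b ∈ LinearMap.ker (dC n) := by
    intro n g b hb
    simp only [LinearMap.mem_ker] at hb ⊢
    rw [hdCequiv, hb, smul_zero]
  have secTop : ∀ H ∈ F, ∃ τ : W →ₗ[R] C 0,
      (∀ h : G, h ∈ H → ∀ b, τ (h • b) = h • τ b) ∧
      ∀ b ∈ (⊤ : Submodule R W), εC (τ b) = b := by
    intro H hH
    obtain ⟨k, km, hk, hkm, hkm', -, -⟩ := hstrong H hH
    exact ⟨km, hkm, fun b _ => hkm' b⟩
  have sec0 : ∀ H ∈ F, ∃ τ : C 0 →ₗ[R] C 1,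
      (∀ h : G, h ∈ H → ∀ b, τ (h • b) = h • τ b) ∧
      ∀ b ∈ LinearMap.ker εC, dC 0 (τ b) = b := by
    intro H hH
    obtain ⟨k, km, hk, hkm, hkm', h0, -⟩ := hstrong H hH
    refine ⟨k 0, hk 0, fun b hb => ?_⟩
    have hb0 := h0 b
    rw [LinearMap.mem_ker.mp hb, map_zero, add_zero] at hb0
    exact hb0
  have secn : ∀ (n : ℕ), ∀ H ∈ F, ∃ τ : C (n + 1) →ₗ[R] C (n + 2),
      (∀ h : G, h ∈ H → ∀ b, τ (h • b) = h • τ b) ∧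
      ∀ b ∈ LinearMap.ker (dC n), dC (n + 1) (τ b) = b := by
    intro n H hH
    obtain ⟨k, km, hk, hkm, hkm', -, hn⟩ := hstrong H hH
    refine ⟨k (n + 1), hk (n + 1), fun b hb => ?_⟩
    have hbn := hn n b
    rw [LinearMap.mem_ker.mp hb, map_zero, add_zero] at hbn
    exact hbn
  obtain ⟨f0, hf0eq, hf0c⟩ := lift_aux R G F (P 0) (C 0) W (hPproj 0) εC hεCequiv
    ⊤ (fun _ _ _ => trivial) secTop (f ∘ₗ εP)
    (fun g x => by simp only [LinearMap.comp_apply]; rw [hεPequiv, hf])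
    (fun _ => trivial)
  obtain ⟨f1, hf1eq, hf1c⟩ := lift_aux R G F (P 1) (C 1) (C 0) (hPproj 1) (dC 0) (hdCequiv 0)
    (LinearMap.ker εC) hkerε sec0 (f0 ∘ₗ dP 0)
    (fun g x => by simp only [LinearMap.comp_apply]; rw [hdPequiv, hf0eq])
    (fun x => by
      simp only [LinearMap.mem_ker, LinearMap.comp_apply]
      rw [hf0c]
      show f (εP (dP 0 x)) = 0
      rw [hεPsq, map_zero])
  constructor
  · -- existence
    have step : ∀ (n : ℕ) (b : P (n + 1) →ₗ[R] C (n + 1)),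
        (∀ (g : G) (x : P (n + 1)), b (g • x) = g • b x) →
        (∀ x : P (n + 2), dC n (b (dP (n + 1) x)) = 0) →
        ∃ c : P (n + 2) →ₗ[R] C (n + 2),
          (∀ (g : G) (x : P (n + 2)), c (g • x) = g • c x) ∧
          ∀ x, dC (n + 1) (c x) = b (dP (n + 1) x) := by
      intro n b hbeq hbker
      obtain ⟨c, hceq, hcc⟩ := lift_aux R G F (P (n + 2)) (C (n + 2)) (C (n + 1))
        (hPproj (n + 2)) (dC (n + 1)) (hdCequiv (n + 1))
        (LinearMap.ker (dC n)) (hkerd n) (secn n) (b ∘ₗ dP (n + 1))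
        (fun g x => by simp only [LinearMap.comp_apply]; rw [hdPequiv, hbeq])
        (fun x => LinearMap.mem_ker.mpr (hbker x))
      exact ⟨c, hceq, fun x => hcc x⟩
    let Mot : ℕ → Type _ := fun n =>
      {pr : (P n →ₗ[R] C n) × (P (n + 1) →ₗ[R] C (n + 1)) //
        (∀ (g : G) (x : P n), pr.1 (g • x) = g • pr.1 x) ∧
        (∀ (g : G) (x : P (n + 1)), pr.2 (g • x) = g • pr.2 x) ∧
        ∀ x : P (n + 1), dC n (pr.2 x) = pr.1 (dP n x)}
    let base : Mot 0 := ⟨(f0, f1), hf0eq, hf1eq, fun x => hf1c x⟩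
    let stepM : ∀ n, Mot n → Mot (n + 1) := fun n prev =>
      have hker : ∀ x : P (n + 2), dC n (prev.1.2 (dP (n + 1) x)) = 0 := fun x => by
        rw [prev.2.2.2, hdPsq, map_zero]
      ⟨(prev.1.2, (step n prev.1.2 prev.2.2.1 hker).choose),
        prev.2.2.1,
        (step n prev.1.2 prev.2.2.1 hker).choose_spec.1,
        (step n prev.1.2 prev.2.2.1 hker).choose_spec.2⟩
    let T : ∀ n, Mot n := fun n => Nat.rec base stepM n
    refine ⟨fun n => (T n).1.1, fun n => (T n).2.1, fun x => ?_, fun n x => ?_⟩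
    · exact hf0c x
    · exact (T n).2.2.2 x
  · -- uniqueness up to homotopy
    rintro fs fs' ⟨hfseq, hfs0, hfsc⟩ ⟨hfs'eq, hfs'0, hfs'c⟩
    let D : ∀ n, P n →ₗ[R] C n := fun n => fs n - fs' n
    have hDeq : ∀ (n : ℕ) (g : G) (x : P n), D n (g • x) = g • D n x := by
      intro n g x
      simp only [D, LinearMap.sub_apply, hfseq, hfs'eq, smul_sub]
    have hD0 : ∀ x : P 0, εC (D 0 x) = 0 := by
      intro x
      simp only [D, LinearMap.sub_apply, map_sub, hfs0, hfs'0, sub_self]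
    have hDc : ∀ (n : ℕ) (x : P (n + 1)), dC n (D (n + 1) x) = D n (dP n x) := by
      intro n x
      simp only [D, LinearMap.sub_apply, map_sub, hfsc, hfs'c]
    obtain ⟨h0, hh0eq, hh0c⟩ := lift_aux R G F (P 0) (C 1) (C 0) (hPproj 0) (dC 0)
      (hdCequiv 0) (LinearMap.ker εC) hkerε sec0 (D 0) (hDeq 0)
      (fun x => LinearMap.mem_ker.mpr (hD0 x))
    obtain ⟨h1, hh1eq, hh1c⟩ := lift_aux R G F (P 1) (C 2) (C 1) (hPproj 1) (dC 1)
      (hdCequiv 1) (LinearMap.ker (dC 0)) (hkerd 0) (secn 0) (D 1 - h0 ∘ₗ dP 0)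
      (fun g x => by
        simp only [LinearMap.sub_apply, LinearMap.comp_apply, hDeq, hdPequiv, hh0eq,
          smul_sub])
      (fun x => by
        simp only [LinearMap.mem_ker, LinearMap.sub_apply, LinearMap.comp_apply, map_sub]
        rw [hDc, hh0c, sub_self])
    have hstep : ∀ (n : ℕ) (a : P n →ₗ[R] C (n + 1)) (b : P (n + 1) →ₗ[R] C (n + 2)),
        (∀ (g : G) (x : P (n + 1)), b (g • x) = g • b x) →
        (∀ x : P (n + 1), dC (n + 1) (b x) = D (n + 1) x - a (dP n x)) →
        ∃ c : P (n + 2) →ₗ[R] C (n + 3),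
          (∀ (g : G) (x : P (n + 2)), c (g • x) = g • c x) ∧
          ∀ x, dC (n + 2) (c x) = D (n + 2) x - b (dP (n + 1) x) := by
      intro n a b hbeq hbc
      obtain ⟨c, hceq, hcc⟩ := lift_aux R G F (P (n + 2)) (C (n + 3)) (C (n + 2))
        (hPproj (n + 2)) (dC (n + 2)) (hdCequiv (n + 2))
        (LinearMap.ker (dC (n + 1))) (hkerd (n + 1)) (secn (n + 1))
        (D (n + 2) - b ∘ₗ dP (n + 1))
        (fun g x => by
          simp only [LinearMap.sub_apply, LinearMap.comp_apply, hDeq, hdPequiv, hbeq,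
            smul_sub])
        (fun x => by
          simp only [LinearMap.mem_ker, LinearMap.sub_apply, LinearMap.comp_apply, map_sub]
          rw [hDc, hbc, hdPsq, map_zero, sub_zero, sub_self])
      exact ⟨c, hceq, fun x => hcc x⟩
    let Mot' : ℕ → Type _ := fun n =>
      {pr : (P n →ₗ[R] C (n + 1)) × (P (n + 1) →ₗ[R] C (n + 2)) //
        (∀ (g : G) (x : P n), pr.1 (g • x) = g • pr.1 x) ∧
        (∀ (g : G) (x : P (n + 1)), pr.2 (g • x) = g • pr.2 x) ∧
        ∀ x : P (n + 1), dC (n + 1) (pr.2 x) = D (n + 1) x - pr.1 (dP n x)}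
    let base : Mot' 0 := ⟨(h0, h1), hh0eq, hh1eq, fun x => hh1c x⟩
    let stepM : ∀ n, Mot' n → Mot' (n + 1) := fun n prev =>
      ⟨(prev.1.2, (hstep n prev.1.1 prev.1.2 prev.2.2.1 prev.2.2.2).choose),
        prev.2.2.1,
        (hstep n prev.1.1 prev.1.2 prev.2.2.1 prev.2.2.2).choose_spec.1,
        (hstep n prev.1.1 prev.1.2 prev.2.2.1 prev.2.2.2).choose_spec.2⟩
    let T : ∀ n, Mot' n := fun n => Nat.rec base stepM n
    refine ⟨fun n => (T n).1.1, fun n => (T n).2.1, fun x => ?_, fun n x => ?_⟩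
    · have e0 : dC 0 ((T 0).1.1 x) = D 0 x := hh0c x
      rw [e0]
      simp only [D, LinearMap.sub_apply]
    · have rel : dC (n + 1) ((T (n + 1)).1.1 x) = D (n + 1) x - (T n).1.1 (dP n x) :=
        (T n).2.2.2 x
      rw [rel]
      simp only [D, LinearMap.sub_apply]
      abel


end Statement6


end RelBdd
end

section
/- Let G be a group and ℋ a set of subgroups of G. Then G is amenable relative to ℋ if and only if there exists a nonzero bounded linear functional μ on ℓ∞(G/ℋ) that is G-invariant, i.e. μ(g·f) = μ(f) for all g ∈ G and f ∈ ℓ∞(G/ℋ), where (g·f)(s) = f(g⁻¹·s). -/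
open scoped BigOperators

universe u v w

namespace RelBdd

variable {G : Type u} [Group G]

section PosPartConstruction

variable {S : Type v}

lemma linf_coe_add (f g : Linf S) (s : S) :
    ((f + g : Linf S) : S → ℝ) s = (f : S → ℝ) s + (g : S → ℝ) s := rfl

lemma linf_coe_smul (c : ℝ) (f : Linf S) (s : S) :
    ((c • f : Linf S) : S → ℝ) s = c * (f : S → ℝ) s := rfl

lemma linf_coe_neg (f : Linf S) (s : S) :
    ((-f : Linf S) : S → ℝ) s = -((f : S → ℝ) s) := rfl

lemma linf_coe_sub (f g : Linf S) (s : S) :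
    ((f - g : Linf S) : S → ℝ) s = (f : S → ℝ) s - (g : S → ℝ) s := rfl

lemma linf_ext {f g : Linf S} (h : ∀ s, (f : S → ℝ) s = (g : S → ℝ) s) : f = g :=
  Subtype.ext (funext h)

/-- Pointwise positive part of an element of `ℓ∞(S)`. -/
def pPart (f : Linf S) : Linf S :=
  ⟨fun s => max ((f : S → ℝ) s) 0, by
    obtain ⟨D, hD⟩ := f.2
    refine ⟨max D 0, fun s => ?_⟩
    rw [abs_of_nonneg (le_max_right _ _)]
    exact max_le_max ((le_abs_self _).trans (hD s)) le_rfl⟩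

lemma pPart_coe (f : Linf S) (s : S) :
    (pPart f : S → ℝ) s = max ((f : S → ℝ) s) 0 := rfl

lemma pPart_nonneg (f : Linf S) (s : S) : 0 ≤ (pPart f : S → ℝ) s := le_max_right _ _

lemma pPart_sub_pPart_neg (f : Linf S) : pPart f - pPart (-f) = f := by
  apply linf_ext
  intro s
  rw [linf_coe_sub, pPart_coe, pPart_coe, linf_coe_neg]
  rcases le_total ((f : S → ℝ) s) 0 with h | h
  · rw [max_eq_right h, max_eq_left (by linarith)]; ring
  · rw [max_eq_left h, max_eq_right (by linarith)]; ring

lemma key_max (x : ℝ) : max x 0 - max (-x) 0 = x := by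
  rcases le_total x 0 with h | h
  · rw [max_eq_right h, max_eq_left (by linarith)]; ring
  · rw [max_eq_left h, max_eq_right (by linarith)]; ring

/-- The set of values `μ h` for `0 ≤ h ≤ f`. -/
def posSet (μ : Linf S →ₗ[ℝ] ℝ) (f : Linf S) : Set ℝ :=
  {x | ∃ h : Linf S, (∀ s, 0 ≤ (h : S → ℝ) s) ∧
      (∀ s, (h : S → ℝ) s ≤ (f : S → ℝ) s) ∧ μ h = x}

/-- The positive part of `μ` evaluated on a (nonnegative) function. -/
noncomputable def qF (μ : Linf S →ₗ[ℝ] ℝ) (f : Linf S) : ℝ :=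
  sSup (posSet μ f)

variable {μ : Linf S →ₗ[ℝ] ℝ} {C : ℝ}
  (hC : ∀ (f : Linf S) (B : ℝ), (∀ s, |(f : S → ℝ) s| ≤ B) → |μ f| ≤ C * B)

include hC in
lemma posSet_bddAbove (f : Linf S) : BddAbove (posSet μ f) := by
  obtain ⟨D, hD⟩ := f.2
  refine ⟨C * max D 0, ?_⟩
  rintro x ⟨h, h0, hle, rfl⟩
  refine (le_abs_self _).trans (hC h _ fun s => ?_)
  rw [abs_of_nonneg (h0 s)]
  exact (hle s).trans ((le_abs_self _).trans ((hD s).trans (le_max_left _ _)))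

lemma zero_mem_posSet {f : Linf S} (hf : ∀ s, 0 ≤ (f : S → ℝ) s) :
    (0 : ℝ) ∈ posSet μ f :=
  ⟨0, fun _ => le_rfl, fun s => hf s, map_zero μ⟩

include hC in
lemma le_qF {f : Linf S} {x : ℝ} (hx : x ∈ posSet μ f) : x ≤ qF μ f :=
  le_csSup (posSet_bddAbove hC f) hx

include hC in
lemma qF_nonneg {f : Linf S} (hf : ∀ s, 0 ≤ (f : S → ℝ) s) : 0 ≤ qF μ f :=
  le_qF hC (zero_mem_posSet hf)

lemma qF_le {f : Linf S} (hf : ∀ s, 0 ≤ (f : S → ℝ) s) {b : ℝ}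
    (hb : ∀ x ∈ posSet μ f, x ≤ b) : qF μ f ≤ b :=
  csSup_le ⟨0, zero_mem_posSet hf⟩ hb

lemma posSet_zero : posSet μ (0 : Linf S) = {0} := by
  ext x
  constructor
  · rintro ⟨h, h0, hle, rfl⟩
    have : h = 0 := linf_ext fun s => le_antisymm (hle s) (h0 s)
    simp [this]
  · rintro rfl
    exact zero_mem_posSet fun _ => le_rfl

lemma qF_zero : qF μ (0 : Linf S) = 0 := by
  unfold qF
  rw [posSet_zero, csSup_singleton]

include hC in
lemma qF_add {f g : Linf S} (hf : ∀ s, 0 ≤ (f : S → ℝ) s)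
    (hg : ∀ s, 0 ≤ (g : S → ℝ) s) : qF μ (f + g) = qF μ f + qF μ g := by
  have hfg : ∀ s, 0 ≤ ((f + g : Linf S) : S → ℝ) s := fun s => by
    rw [linf_coe_add]; exact add_nonneg (hf s) (hg s)
  apply le_antisymm
  · -- split h into min h f and the rest
    apply qF_le hfg
    rintro x ⟨h, h0, hle, rfl⟩
    obtain ⟨D, hD⟩ := f.2
    set h1 : Linf S := ⟨fun s => min ((h : S → ℝ) s) ((f : S → ℝ) s),
      ⟨max D 0, fun s => by
        rw [abs_of_nonneg (le_min (h0 s) (hf s))]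
        exact (min_le_right _ _).trans ((le_abs_self _).trans ((hD s).trans (le_max_left _ _)))⟩⟩
      with hh1
    have h1coe : ∀ s, (h1 : S → ℝ) s = min ((h : S → ℝ) s) ((f : S → ℝ) s) := fun s => rfl
    have h1mem : μ h1 ∈ posSet μ f :=
      ⟨h1, fun s => by rw [h1coe]; exact le_min (h0 s) (hf s),
        fun s => by rw [h1coe]; exact min_le_right _ _, rfl⟩
    have h2mem : μ (h - h1) ∈ posSet μ g := by
      refine ⟨h - h1, fun s => ?_, fun s => ?_, rfl⟩
      · rw [linf_coe_sub, h1coe]; simp [min_le_left]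
      · rw [linf_coe_sub, h1coe]
        have := hle s
        rw [linf_coe_add] at this
        rcases le_total ((h : S → ℝ) s) ((f : S → ℝ) s) with hc | hc
        · rw [min_eq_left hc]; linarith [hg s]
        · rw [min_eq_right hc]; linarith
    have : μ h = μ h1 + μ (h - h1) := by rw [← map_add]; congr 1; abel
    rw [this]
    exact add_le_add (le_qF hC h1mem) (le_qF hC h2mem)
  · -- sums of elements
    have key : ∀ x ∈ posSet μ f, ∀ y ∈ posSet μ g, x + y ≤ qF μ (f + g) := by
      rintro x ⟨h1, h10, h1le, rfl⟩ y ⟨h2, h20, h2le, rfl⟩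
      refine le_qF hC ⟨h1 + h2, fun s => ?_, fun s => ?_, map_add μ h1 h2⟩
      · rw [linf_coe_add]; exact add_nonneg (h10 s) (h20 s)
      · rw [linf_coe_add, linf_coe_add]; exact add_le_add (h1le s) (h2le s)
    have hq : ∀ x ∈ posSet μ f, x ≤ qF μ (f + g) - qF μ g := by
      intro x hx
      rw [le_sub_iff_add_le]
      have : qF μ g ≤ qF μ (f + g) - x :=
        qF_le hg fun y hy => by linarith [key x hx y hy]
      linarith
    have := qF_le hf hq
    linarith

include hC in
lemma qF_smul {c : ℝ} (hc : 0 ≤ c) {f : Linf S} (hf : ∀ s, 0 ≤ (f : S → ℝ) s) :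
    qF μ (c • f) = c * qF μ f := by
  rcases eq_or_lt_of_le hc with rfl | hcpos
  · rw [zero_smul, qF_zero, zero_mul]
  · have main : ∀ (d : ℝ), 0 < d → ∀ (k : Linf S), (∀ s, 0 ≤ (k : S → ℝ) s) →
        qF μ (d • k) ≤ d * qF μ k := by
      intro d hd k hk
      apply qF_le (fun s => by rw [linf_coe_smul]; exact mul_nonneg hd.le (hk s))
      rintro x ⟨h, h0, hle, rfl⟩
      have hmem : μ (d⁻¹ • h) ∈ posSet μ k := by
        refine ⟨d⁻¹ • h, fun s => ?_, fun s => ?_, rfl⟩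
        · rw [linf_coe_smul]; exact mul_nonneg (inv_nonneg.2 hd.le) (h0 s)
        · rw [linf_coe_smul]
          have := hle s
          rw [linf_coe_smul] at this
          calc d⁻¹ * (h : S → ℝ) s ≤ d⁻¹ * (d * (k : S → ℝ) s) :=
                mul_le_mul_of_nonneg_left this (inv_nonneg.2 hd.le)
            _ = (k : S → ℝ) s := by field_simp
      have : μ h = d * μ (d⁻¹ • h) := by
        rw [map_smul, smul_eq_mul]; field_simp
      rw [this]
      exact mul_le_mul_of_nonneg_left (le_qF hC hmem) hd.le
    apply le_antisymm (main c hcpos f hf)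
    have hcf : ∀ s, 0 ≤ ((c • f : Linf S) : S → ℝ) s := fun s => by
      rw [linf_coe_smul]; exact mul_nonneg hcpos.le (hf s)
    have := main c⁻¹ (inv_pos.2 hcpos) (c • f) hcf
    rw [inv_smul_smul₀ hcpos.ne'] at this
    calc c * qF μ f ≤ c * (c⁻¹ * qF μ (c • f)) :=
          mul_le_mul_of_nonneg_left this hcpos.le
      _ = qF μ (c • f) := by field_simp

/-- The linearized positive part `T μ f = qF(f⁺) - qF(f⁻)`. -/
noncomputable def TF (μ : Linf S →ₗ[ℝ] ℝ) (f : Linf S) : ℝ :=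
  qF μ (pPart f) - qF μ (pPart (-f))

include hC in
lemma TF_add (f g : Linf S) : TF μ (f + g) = TF μ f + TF μ g := by
  have hkey : pPart (f + g) + pPart (-f) + pPart (-g)
      = pPart (-(f + g)) + pPart f + pPart g := by
    apply linf_ext
    intro s
    simp only [linf_coe_add, pPart_coe, linf_coe_neg]
    have k1 := key_max (((f : S → ℝ) s) + ((g : S → ℝ) s))
    have k2 := key_max ((f : S → ℝ) s)
    have k3 := key_max ((g : S → ℝ) s)
    rw [neg_add] at k1 ⊢
    linarith
  have e1 := qF_add hC (μ := μ)
    (f := pPart (f + g) + pPart (-f)) (g := pPart (-g))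
    (fun s => by rw [linf_coe_add]; exact add_nonneg (pPart_nonneg _ s) (pPart_nonneg _ s))
    (pPart_nonneg _)
  have e2 := qF_add hC (μ := μ) (f := pPart (f + g)) (g := pPart (-f))
    (pPart_nonneg _) (pPart_nonneg _)
  have e3 := qF_add hC (μ := μ)
    (f := pPart (-(f + g)) + pPart f) (g := pPart g)
    (fun s => by rw [linf_coe_add]; exact add_nonneg (pPart_nonneg _ s) (pPart_nonneg _ s))
    (pPart_nonneg _)
  have e4 := qF_add hC (μ := μ) (f := pPart (-(f + g))) (g := pPart f)
    (pPart_nonneg _) (pPart_nonneg _)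
  have := hkey ▸ e1
  rw [e2] at e1
  rw [e4] at e3
  have heq : qF μ (pPart (f + g) + pPart (-f) + pPart (-g))
      = qF μ (pPart (-(f + g)) + pPart f + pPart g) := by rw [hkey]
  rw [e1, e3] at heq
  unfold TF
  linarith

lemma pPart_neg_neg (f : Linf S) : pPart (-(-f)) = pPart f := by rw [neg_neg]

include hC in
lemma TF_neg (f : Linf S) : TF μ (-f) = -TF μ f := by
  unfold TF
  rw [neg_neg]
  ring

lemma pPart_smul {c : ℝ} (hc : 0 ≤ c) (f : Linf S) : pPart (c • f) = c • pPart f := by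
  apply linf_ext
  intro s
  rw [pPart_coe, linf_coe_smul, linf_coe_smul, pPart_coe]
  rcases le_total ((f : S → ℝ) s) 0 with h | h
  · rw [max_eq_right h, max_eq_right (mul_nonpos_of_nonneg_of_nonpos hc h), mul_zero]
  · rw [max_eq_left h, max_eq_left (mul_nonneg hc h)]

include hC in
lemma TF_smul (c : ℝ) (f : Linf S) : TF μ (c • f) = c * TF μ f := by
  rcases le_total 0 c with hc | hc
  · unfold TF
    have h1 : -(c • f) = c • (-f) := by rw [smul_neg]
    rw [h1, pPart_smul hc, pPart_smul hc, qF_smul hC hc (pPart_nonneg _),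
      qF_smul hC hc (pPart_nonneg _)]
    ring
  · have h0 : 0 ≤ -c := by linarith
    have : c • f = (-c) • (-f) := by rw [smul_neg, neg_smul, neg_neg]
    rw [this]
    unfold TF
    have h1 : -((-c) • (-f)) = (-c) • f := by rw [smul_neg, neg_neg]
    rw [h1, pPart_smul h0, pPart_smul h0, qF_smul hC h0 (pPart_nonneg _),
      qF_smul hC h0 (pPart_nonneg _)]
    ring

include hC in
lemma TF_nonneg {f : Linf S} (hf : ∀ s, 0 ≤ (f : S → ℝ) s) : 0 ≤ TF μ f := by
  unfold TF
  have : pPart (-f) = 0 := by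
    apply linf_ext
    intro s
    rw [pPart_coe, linf_coe_neg]
    exact max_eq_right (by linarith [hf s])
  rw [this, qF_zero]
  have : 0 ≤ qF μ (pPart f) := qF_nonneg hC (pPart_nonneg f)
  linarith

end PosPartConstruction

section Invariance

variable {G : Type u} [Group G] {S : Type v} [MulAction G S]

lemma compL_coe (φ : S → S) (f : Linf S) (s : S) :
    (compL φ f : S → ℝ) s = (f : S → ℝ) (φ s) := rfl

variable {μ : Linf S →ₗ[ℝ] ℝ}
  (hinv : ∀ (g : G) (f : Linf S), μ (compL (fun s => g⁻¹ • s) f) = μ f)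

include hinv in
lemma posSet_invariant (g : G) (f : Linf S) :
    posSet μ (compL (fun s => g⁻¹ • s) f) = posSet μ f := by
  have hinv' : ∀ (f : Linf S), μ (compL (fun s => g • s) f) = μ f := by
    intro f
    have := hinv g⁻¹ f
    rwa [inv_inv] at this
  ext x
  constructor
  · rintro ⟨h, h0, hle, rfl⟩
    refine ⟨compL (fun s => g • s) h, fun s => h0 _, fun s => ?_, hinv' h⟩
    rw [compL_coe]
    have := hle (g • s)
    rw [compL_coe] at this
    rwa [inv_smul_smul] at this
  · rintro ⟨h, h0, hle, rfl⟩
    refine ⟨compL (fun s => g⁻¹ • s) h, fun s => h0 _, fun s => ?_, hinv g h⟩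
    rw [compL_coe, compL_coe]
    exact hle _

include hinv in
lemma qF_invariant (g : G) (f : Linf S) :
    qF μ (compL (fun s => g⁻¹ • s) f) = qF μ f := by
  unfold qF
  rw [posSet_invariant hinv g f]

lemma pPart_compL (φ : S → S) (f : Linf S) :
    pPart (compL φ f) = compL φ (pPart f) :=
  linf_ext fun s => rfl

lemma neg_compL (φ : S → S) (f : Linf S) :
    -(compL φ f) = compL φ (-f) :=
  linf_ext fun s => rfl

include hinv in
lemma TF_invariant (g : G) (f : Linf S) :
    TF μ (compL (fun s => g⁻¹ • s) f) = TF μ f := by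
  unfold TF
  rw [neg_compL, pPart_compL, pPart_compL, qF_invariant hinv g, qF_invariant hinv g]

end Invariance

/-- A group `G` is amenable relative to a set `ℋ` of subgroups if
and only if there exists a nonzero `G`-invariant bounded linear functional on
`ℓ∞(G/ℋ)`. -/
theorem relatively_amenable_iff_invariant_functional (G : Type u) [Group G]
    (ℋ : Set (Subgroup G)) :
    InvariantMean G (Cos G ℋ) ↔
      ∃ μ : Linf (Cos G ℋ) →ₗ[ℝ] ℝ,
        (∃ C : ℝ, ∀ (f : Linf (Cos G ℋ)) (B : ℝ),
          (∀ s, |(f : Cos G ℋ → ℝ) s| ≤ B) → |μ f| ≤ C * B) ∧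
        μ ≠ 0 ∧
        ∀ (g : G) (f : Linf (Cos G ℋ)), μ (compL (fun s => g⁻¹ • s) f) = μ f := by
  set S := Cos G ℋ
  constructor
  · rintro ⟨m, hm1, hmpos, hminv⟩
    refine ⟨m, ⟨1, fun f B hfB => ?_⟩, fun h => ?_, hminv⟩
    · have hconst : ∀ r : ℝ, m (constLinf S r) = r := by
        intro r
        have : constLinf S r = r • constLinf S 1 := by
          apply linf_ext
          intro s
          rw [linf_coe_smul]
          show r = r * 1
          ring
        rw [this, map_smul, smul_eq_mul, hm1, mul_one]
      have h1 : 0 ≤ m (constLinf S B - f) := by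
        apply hmpos
        intro s
        rw [linf_coe_sub]
        have := abs_le.mp (hfB s)
        show 0 ≤ B - (f : S → ℝ) s
        linarith [this.2]
      have h2 : 0 ≤ m (constLinf S B + f) := by
        apply hmpos
        intro s
        rw [linf_coe_add]
        have := abs_le.mp (hfB s)
        show 0 ≤ B + (f : S → ℝ) s
        linarith [this.1]
      rw [map_sub] at h1
      rw [map_add] at h2
      rw [hconst] at h1 h2
      rw [abs_le, one_mul]
      constructor <;> linarith
    · rw [h, LinearMap.zero_apply] at hm1
      exact one_ne_zero hm1.symm
  · rintro ⟨μ, ⟨C, hC⟩, hne, hinv⟩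
    have hC' : ∀ (f : Linf S) (B : ℝ), (∀ s, |(f : S → ℝ) s| ≤ B) → |(-μ) f| ≤ C * B := by
      intro f B h
      rw [LinearMap.neg_apply, abs_neg]
      exact hC f B h
    have hinv' : ∀ (g : G) (f : Linf S), (-μ) (compL (fun s => g⁻¹ • s) f) = (-μ) f := by
      intro g f
      rw [LinearMap.neg_apply, LinearMap.neg_apply, hinv]
    set ν : Linf S →ₗ[ℝ] ℝ :=
      { toFun := fun f => TF μ f + TF (-μ) f
        map_add' := fun f g => by
          change TF μ (f + g) + TF (-μ) (f + g)
            = TF μ f + TF (-μ) f + (TF μ g + TF (-μ) g)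
          rw [TF_add hC, TF_add hC']; ring
        map_smul' := fun c f => by
          change TF μ (c • f) + TF (-μ) (c • f) = c * (TF μ f + TF (-μ) f)
          rw [TF_smul hC, TF_smul hC']; ring } with hν
    have νapp : ∀ f : Linf S, ν f = TF μ f + TF (-μ) f := fun f => rfl
    set one : Linf S := constLinf S 1 with hone
    have one_coe : ∀ s, (one : S → ℝ) s = 1 := fun s => rfl
    have pPart_one : pPart one = one := by
      apply linf_ext
      intro s
      rw [pPart_coe, one_coe]
      exact max_eq_left zero_le_one
    have pPart_neg_one : pPart (-one) = 0 := by
      apply linf_ext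
      intro s
      rw [pPart_coe, linf_coe_neg, one_coe]
      show max (-1 : ℝ) 0 = 0
      rw [max_eq_right (by norm_num)]
    have TF_one : ∀ (φ : Linf S →ₗ[ℝ] ℝ), TF φ one = qF φ one := by
      intro φ
      unfold TF
      rw [pPart_one, pPart_neg_one, qF_zero, sub_zero]
    -- ν one > 0
    obtain ⟨f, hf⟩ : ∃ f : Linf S, μ f ≠ 0 := by
      by_contra h
      push_neg at h
      exact hne (LinearMap.ext fun f => by rw [h f, LinearMap.zero_apply])
    obtain ⟨D, hD⟩ := f.2
    set B : ℝ := max D 1 with hB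
    have hBpos : (0 : ℝ) < B := lt_of_lt_of_le one_pos (le_max_right _ _)
    have hfB : ∀ s, |(f : S → ℝ) s| ≤ B := fun s => (hD s).trans (le_max_left _ _)
    set k : Linf S := B⁻¹ • f with hk
    have hμk : μ k ≠ 0 := by
      rw [hk, map_smul, smul_eq_mul]
      exact mul_ne_zero (inv_ne_zero hBpos.ne') hf
    have hk1 : ∀ s, |(k : S → ℝ) s| ≤ 1 := by
      intro s
      rw [hk, linf_coe_smul, abs_mul, abs_of_nonneg (inv_nonneg.2 hBpos.le)]
      calc B⁻¹ * |(f : S → ℝ) s| ≤ B⁻¹ * B :=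
            mul_le_mul_of_nonneg_left (hfB s) (inv_nonneg.2 hBpos.le)
        _ = 1 := inv_mul_cancel₀ hBpos.ne'
    have hsplit : μ (pPart k) - μ (pPart (-k)) ≠ 0 := by
      rw [← map_sub, pPart_sub_pPart_neg]
      exact hμk
    have hboth : ∀ h : Linf S, (∀ s, 0 ≤ (h : S → ℝ) s) → (∀ s, (h : S → ℝ) s ≤ 1) →
        μ h ≠ 0 → 0 < ν one := by
      intro h h0 h1 hμh
      have hmem : μ h ∈ posSet μ one := ⟨h, h0, fun s => by rw [one_coe]; exact h1 s, rfl⟩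
      have hmem' : (-μ) h ∈ posSet (-μ) one :=
        ⟨h, h0, fun s => by rw [one_coe]; exact h1 s, rfl⟩
      have q1 : μ h ≤ qF μ one := le_qF hC hmem
      have q2 : -(μ h) ≤ qF (-μ) one := by
        have := le_qF hC' hmem'
        rwa [LinearMap.neg_apply] at this
      have q3 : 0 ≤ qF μ one := qF_nonneg hC fun s => by rw [one_coe]; norm_num
      have q4 : 0 ≤ qF (-μ) one := qF_nonneg hC' fun s => by rw [one_coe]; norm_num
      rw [νapp, TF_one, TF_one]
      rcases lt_or_gt_of_ne hμh with hlt | hgt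
      · linarith
      · linarith
    have hν1 : 0 < ν one := by
      have hpk : ∀ s, 0 ≤ (pPart k : S → ℝ) s := pPart_nonneg k
      have hpk1 : ∀ s, (pPart k : S → ℝ) s ≤ 1 := fun s => by
        rw [pPart_coe]
        exact max_le ((le_abs_self _).trans (hk1 s)) zero_le_one
      have hpnk : ∀ s, 0 ≤ (pPart (-k) : S → ℝ) s := pPart_nonneg (-k)
      have hpnk1 : ∀ s, (pPart (-k) : S → ℝ) s ≤ 1 := fun s => by
        rw [pPart_coe, linf_coe_neg]
        exact max_le ((neg_le_abs _).trans (hk1 s)) zero_le_one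
      rcases ne_or_eq (μ (pPart k)) 0 with hne1 | heq1
      · exact hboth _ hpk hpk1 hne1
      · have : μ (pPart (-k)) ≠ 0 := by
          intro h0
          rw [heq1, h0, sub_zero] at hsplit
          exact hsplit rfl
        exact hboth _ hpnk hpnk1 this
    -- the mean
    refine ⟨(ν one)⁻¹ • ν, ?_, ?_, ?_⟩
    · rw [LinearMap.smul_apply, smul_eq_mul]
      exact inv_mul_cancel₀ hν1.ne'
    · intro f hfpos
      rw [LinearMap.smul_apply, smul_eq_mul]
      refine mul_nonneg (inv_nonneg.2 hν1.le) ?_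
      rw [νapp]
      exact add_nonneg (TF_nonneg hC hfpos) (TF_nonneg hC' hfpos)
    · intro g f
      rw [LinearMap.smul_apply, LinearMap.smul_apply, smul_eq_mul, smul_eq_mul]
      congr 1
      rw [νapp, νapp, TF_invariant hinv, TF_invariant hinv']


end RelBdd
end

section
/- Let G be a group, F a family of subgroups of G, W a normed ℝG-module with dual W^#, and S a G-set such that every point stabilizer G_s is amenable relative to the family F|_{G_s} = {L ∩ G_s : L ∈ F} (i.e. the G_s-set ⨿_{L∈F|_{G_s}} G_s/L admits a G_s-invariant mean). Then for every n ≥ 0 the normed ℝG-module B(S^{n+1}, W^#) of bounded functions S^{n+1} → W^# with sup norm and action (g·f)(x) = g·f(g⁻¹·x) is relatively F-injective. -/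
open scoped BigOperators

universe u v w

namespace RelBdd

variable {G : Type u} [Group G]

-- auxiliary lemmas

lemma smulCLM_apply {W : Type w} [NormedAddCommGroup W] [NormedSpace ℝ W] [DistribMulAction G W]
    [SMulCommClass G ℝ W] (hW : ∀ (g : G) (w : W), ‖g • w‖ = ‖w‖) (g : G) (w : W) :
    smulCLM hW g w = g • w := rfl

lemma mean_const {T : Type v} (m : Linf T →ₗ[ℝ] ℝ) (h1 : m (constLinf T 1) = 1) (c : ℝ) :
    m (constLinf T c) = c := by
  have h : constLinf T c = c • constLinf T 1 := by
    apply Subtype.ext; funext t; simp [constLinf]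
  rw [h, map_smul, h1, smul_eq_mul, mul_one]

lemma mean_abs_le {T : Type v} (m : Linf T →ₗ[ℝ] ℝ) (h1 : m (constLinf T 1) = 1)
    (hpos : ∀ f : Linf T, (∀ t, 0 ≤ (f : T → ℝ) t) → 0 ≤ m f)
    (f : Linf T) (c : ℝ) (hc : ∀ t, |(f : T → ℝ) t| ≤ c) : |m f| ≤ c := by
  have h₁ : 0 ≤ m (constLinf T c - f) := by
    refine hpos _ fun t => ?_
    have h2 := (abs_le.mp (hc t)).2
    have hco : ((constLinf T c - f : Linf T) : T → ℝ) t = c - (f : T → ℝ) t := rfl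
    rw [hco]; linarith
  have h₂ : 0 ≤ m (constLinf T c + f) := by
    refine hpos _ fun t => ?_
    have h2 := (abs_le.mp (hc t)).1
    have hco : ((constLinf T c + f : Linf T) : T → ℝ) t = c + (f : T → ℝ) t := rfl
    rw [hco]; linarith
  rw [map_sub] at h₁
  rw [map_add] at h₂
  rw [mean_const m h1] at h₁ h₂
  rw [abs_le]
  constructor <;> linarith

set_option linter.unusedSectionVars false

section Phi

variable {S : Type u} [MulAction G S]
  {W : Type v} [NormedAddCommGroup W] [NormedSpace ℝ W] [DistribMulAction G W]
  [SMulCommClass G ℝ W]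
  {A : Type w} [NormedAddCommGroup A] [NormedSpace ℝ A] [DistribMulAction G A]
  [SMulCommClass G ℝ A]
  {B : Type w} [NormedAddCommGroup B] [NormedSpace ℝ B] [DistribMulAction G B]
  [SMulCommClass G ℝ B]

def phi (n : ℕ) (ψ : A →ₗ[ℝ] ((Fin (n + 1) → S) → (W →L[ℝ] ℝ))) (σ : B →L[ℝ] A)
    (g : G) (b : B) (x : Fin (n + 1) → S) (w : W) : ℝ :=
  ψ (σ (g⁻¹ • b)) (fun j => g⁻¹ • x j) (g⁻¹ • w)

lemma phi_conj (n : ℕ) (ψ : A →ₗ[ℝ] ((Fin (n + 1) → S) → (W →L[ℝ] ℝ))) (σ : B →L[ℝ] A)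
    (g g₀ : G) (b : B) (x : Fin (n + 1) → S) (w : W) :
    phi n ψ σ (g * g₀) b x w
      = phi n ψ σ g₀ (g⁻¹ • b) (fun j => g⁻¹ • x j) (g⁻¹ • w) := by
  simp [phi, mul_smul, mul_inv_rev]

variable (hW : ∀ (g : G) (w : W), ‖g • w‖ = ‖w‖)

lemma phi_right (n : ℕ) (ψ : A →ₗ[ℝ] ((Fin (n + 1) → S) → (W →L[ℝ] ℝ))) (σ : B →L[ℝ] A)
    (hψequiv : ∀ (g : G) (a : A) (x : Fin (n + 1) → S),
      ψ (g • a) x = (ψ a (fun j => g⁻¹ • x j)).comp (smulCLM hW g⁻¹))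
    (H : Subgroup G) (hσ : ∀ h : G, h ∈ H → ∀ b, σ (h • b) = h • σ b)
    (g h : G) (hh : h ∈ H) (b : B) (x : Fin (n + 1) → S) (w : W) :
    phi n ψ σ (g * h) b x w = phi n ψ σ g b x w := by
  have h1 : σ (h⁻¹ • (g⁻¹ • b)) = h⁻¹ • σ (g⁻¹ • b) := hσ h⁻¹ (inv_mem hh) _
  simp only [phi, mul_inv_rev, mul_smul, h1]
  rw [hψequiv h⁻¹]
  simp [ContinuousLinearMap.comp_apply, smulCLM_apply, smul_inv_smul]

lemma phi_i (n : ℕ) (ψ : A →ₗ[ℝ] ((Fin (n + 1) → S) → (W →L[ℝ] ℝ))) (σ : B →L[ℝ] A)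
    (i : A →L[ℝ] B) (hi : ∀ (g : G) (a : A), i (g • a) = g • i a)
    (hσs : ∀ a, σ (i a) = a)
    (hψequiv : ∀ (g : G) (a : A) (x : Fin (n + 1) → S),
      ψ (g • a) x = (ψ a (fun j => g⁻¹ • x j)).comp (smulCLM hW g⁻¹))
    (g : G) (a : A) (x : Fin (n + 1) → S) (w : W) :
    phi n ψ σ g (i a) x w = ψ a x w := by
  have h1 : σ (g⁻¹ • i a) = g⁻¹ • a := by rw [← hi, hσs]
  simp only [phi, h1]
  rw [hψequiv g⁻¹]
  simp [ContinuousLinearMap.comp_apply, smulCLM_apply, smul_inv_smul]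

lemma phi_bound (hWn : ∀ (g : G) (w : W), ‖g • w‖ = ‖w‖) (n : ℕ) (ψ : A →ₗ[ℝ] ((Fin (n + 1) → S) → (W →L[ℝ] ℝ))) (σ : B →L[ℝ] A)
    (C K : ℝ) (hC0 : 0 ≤ C)
    (hψ : ∀ (a : A) (x : Fin (n + 1) → S), ‖ψ a x‖ ≤ C * ‖a‖) (hσ : ‖σ‖ ≤ K)
    (hB : ∀ (g : G) (b : B), ‖g • b‖ = ‖b‖)
    (g : G) (b : B) (x : Fin (n + 1) → S) (w : W) :
    |phi n ψ σ g b x w| ≤ C * K * ‖b‖ * ‖w‖ := by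
  have h1 : |phi n ψ σ g b x w| ≤ ‖ψ (σ (g⁻¹ • b)) (fun j => g⁻¹ • x j)‖ * ‖g⁻¹ • w‖ := by
    show |ψ (σ (g⁻¹ • b)) (fun j => g⁻¹ • x j) (g⁻¹ • w)| ≤ _
    simpa [Real.norm_eq_abs] using
      (ψ (σ (g⁻¹ • b)) (fun j => g⁻¹ • x j)).le_opNorm (g⁻¹ • w)
  have h2 : ‖ψ (σ (g⁻¹ • b)) (fun j => g⁻¹ • x j)‖ ≤ C * (K * ‖b‖) := by
    refine (hψ _ _).trans ?_
    have h3 : ‖σ (g⁻¹ • b)‖ ≤ K * ‖b‖ := by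
      refine (σ.le_opNorm _).trans ?_
      rw [hB]
      exact mul_le_mul_of_nonneg_right hσ (norm_nonneg b)
    exact mul_le_mul_of_nonneg_left h3 hC0
  calc |phi n ψ σ g b x w| ≤ ‖ψ (σ (g⁻¹ • b)) (fun j => g⁻¹ • x j)‖ * ‖g⁻¹ • w‖ := h1
    _ = ‖ψ (σ (g⁻¹ • b)) (fun j => g⁻¹ • x j)‖ * ‖w‖ := by rw [hWn]
    _ ≤ C * (K * ‖b‖) * ‖w‖ := mul_le_mul_of_nonneg_right h2 (norm_nonneg _)
    _ = C * K * ‖b‖ * ‖w‖ := by ring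

lemma phi_add_b (n : ℕ) (ψ : A →ₗ[ℝ] ((Fin (n + 1) → S) → (W →L[ℝ] ℝ))) (σ : B →L[ℝ] A)
    (g : G) (b b' : B) (x : Fin (n + 1) → S) (w : W) :
    phi n ψ σ g (b + b') x w = phi n ψ σ g b x w + phi n ψ σ g b' x w := by
  simp [phi, smul_add]

lemma phi_smul_b (n : ℕ) (ψ : A →ₗ[ℝ] ((Fin (n + 1) → S) → (W →L[ℝ] ℝ))) (σ : B →L[ℝ] A)
    (g : G) (r : ℝ) (b : B) (x : Fin (n + 1) → S) (w : W) :
    phi n ψ σ g (r • b) x w = r * phi n ψ σ g b x w := by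
  have h : g⁻¹ • (r • b) = r • (g⁻¹ • b) := smul_comm _ _ _
  simp [phi, h]

lemma phi_add_w (n : ℕ) (ψ : A →ₗ[ℝ] ((Fin (n + 1) → S) → (W →L[ℝ] ℝ))) (σ : B →L[ℝ] A)
    (g : G) (b : B) (x : Fin (n + 1) → S) (w w' : W) :
    phi n ψ σ g b x (w + w') = phi n ψ σ g b x w + phi n ψ σ g b x w' := by
  simp [phi, smul_add]

lemma phi_smul_w (n : ℕ) (ψ : A →ₗ[ℝ] ((Fin (n + 1) → S) → (W →L[ℝ] ℝ))) (σ : B →L[ℝ] A)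
    (g : G) (b : B) (x : Fin (n + 1) → S) (r : ℝ) (w : W) :
    phi n ψ σ g b x (r • w) = r * phi n ψ σ g b x w := by
  have h : g⁻¹ • (r • w) = r • (g⁻¹ • w) := smul_comm _ _ _
  simp [phi, h]

end Phi

/-- Let `S` be a `G`-set all of whose stabilizers `G_s` are
amenable relative to `F|_{G_s}`, and let `W^# = W →L[ℝ] ℝ` be the dual of a normed
`ℝG`-module `W` (with action `(g • φ) w = φ (g⁻¹ • w)`).  Then for every `n ≥ 0` the
normed `ℝG`-module `B(S^{n+1}, W^#)` of bounded functions `S^{n+1} → W^#` (sup norm,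
action `(g • f) x = g • f (g⁻¹ • x)`) is relatively `F`-injective. -/
theorem bounded_dual_functions_relatively_injective (G : Type u) [Group G]
    (F : Set (Subgroup G)) (hF : IsFamily F)
    (S : Type u) [MulAction G S]
    (hS : ∀ s : S, RelativelyAmenable (MulAction.stabilizer G s)
      (restrictedFamily F (MulAction.stabilizer G s)))
    (W : Type v) [NormedAddCommGroup W] [NormedSpace ℝ W] [DistribMulAction G W]
    [SMulCommClass G ℝ W] (hW : ∀ (g : G) (w : W), ‖g • w‖ = ‖w‖)
    (n : ℕ)
    (A : Type w) [NormedAddCommGroup A] [NormedSpace ℝ A] [DistribMulAction G A]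
    [SMulCommClass G ℝ A] (hA : ∀ (g : G) (a : A), ‖g • a‖ = ‖a‖)
    (B : Type w) [NormedAddCommGroup B] [NormedSpace ℝ B] [DistribMulAction G B]
    [SMulCommClass G ℝ B] (hB : ∀ (g : G) (b : B), ‖g • b‖ = ‖b‖)
    (i : A →L[ℝ] B) (hi : ∀ (g : G) (a : A), i (g • a) = g • i a)
    (hstrong : ∃ K : ℝ, 0 ≤ K ∧ ∀ H ∈ F, ∃ σ : B →L[ℝ] A,
      ‖σ‖ ≤ K ∧ (∀ h : G, h ∈ H → ∀ b, σ (h • b) = h • σ b) ∧ ∀ a, σ (i a) = a)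
    (ψ : A →ₗ[ℝ] ((Fin (n + 1) → S) → (W →L[ℝ] ℝ)))
    (hψbdd : ∃ C : ℝ, ∀ (a : A) (x : Fin (n + 1) → S), ‖ψ a x‖ ≤ C * ‖a‖)
    (hψequiv : ∀ (g : G) (a : A) (x : Fin (n + 1) → S),
      ψ (g • a) x = (ψ a (fun j => g⁻¹ • x j)).comp (smulCLM hW g⁻¹)) :
    ∃ Ψ : B →ₗ[ℝ] ((Fin (n + 1) → S) → (W →L[ℝ] ℝ)),
      (∃ C : ℝ, ∀ (b : B) (x : Fin (n + 1) → S), ‖Ψ b x‖ ≤ C * ‖b‖) ∧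
      (∀ (g : G) (b : B) (x : Fin (n + 1) → S),
        Ψ (g • b) x = (Ψ b (fun j => g⁻¹ • x j)).comp (smulCLM hW g⁻¹)) ∧
      ∀ a, Ψ (i a) = ψ a := by
  classical
  obtain ⟨C₀, hC₀⟩ := hψbdd
  obtain ⟨K₀, hK₀, hσex⟩ := hstrong
  choose σ hσnorm hσequiv hσsec using hσex
  have hS' : ∀ s : S, ∃ m : Linf (Cos (MulAction.stabilizer G s)
      (restrictedFamily F (MulAction.stabilizer G s))) →ₗ[ℝ] ℝ,
      m (constLinf (Cos (MulAction.stabilizer G s)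
        (restrictedFamily F (MulAction.stabilizer G s))) 1) = 1 ∧
      (∀ f : Linf (Cos (MulAction.stabilizer G s)
          (restrictedFamily F (MulAction.stabilizer G s))),
        (∀ t, 0 ≤ (f : Cos (MulAction.stabilizer G s)
          (restrictedFamily F (MulAction.stabilizer G s)) → ℝ) t) → 0 ≤ m f) ∧
      ∀ (g : MulAction.stabilizer G s)
        (f : Linf (Cos (MulAction.stabilizer G s)
          (restrictedFamily F (MulAction.stabilizer G s)))),
        m (compL (fun t => g⁻¹ • t) f) = m f :=
    fun s => hS s
  choose m hm1 hmpos hminv using hS'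
  set C : ℝ := max C₀ 0 with hCdef
  have hC0 : 0 ≤ C := le_max_right _ _
  have hCψ : ∀ (a : A) (x : Fin (n + 1) → S), ‖ψ a x‖ ≤ C * ‖a‖ := fun a x =>
    (hC₀ a x).trans (mul_le_mul_of_nonneg_right (le_max_left _ _) (norm_nonneg a))
  have hHL : ∀ (s : S) (L : ↥(restrictedFamily F (MulAction.stabilizer G s))),
      Subgroup.map (MulAction.stabilizer G s).subtype (L : Subgroup _) ∈ F := by
    rintro s ⟨L, hL⟩
    obtain ⟨H, hH, rfl⟩ := hL
    refine hF.2.2 H hH _ ?_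
    intro x hx
    obtain ⟨l, hl, rfl⟩ := Subgroup.mem_map.mp hx
    exact Subgroup.mem_subgroupOf.mp hl
  set rp : S → S := fun s => (Quotient.mk (MulAction.orbitRel G S) s).out with hrpdef
  have hrpex : ∀ s : S, ∃ g : G, g • rp s = s := by
    intro s
    have h : Quotient.mk (MulAction.orbitRel G S) (rp s)
        = Quotient.mk (MulAction.orbitRel G S) s := Quotient.out_eq _
    have h2 : rp s ∈ MulAction.orbit G s := Quotient.exact h
    obtain ⟨g, hg⟩ := MulAction.mem_orbit_iff.mp h2
    exact ⟨g⁻¹, by rw [← hg]; exact inv_smul_smul g s⟩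
  choose tr htr using hrpex
  have hrps : ∀ (g : G) (s : S), rp (g • s) = rp s := by
    intro g s
    show (Quotient.mk (MulAction.orbitRel G S) (g • s)).out
        = (Quotient.mk (MulAction.orbitRel G S) s).out
    exact congrArg Quotient.out (Quotient.sound (MulAction.mem_orbit s g))
  let fcL : ∀ (sb : S) (g₀ : G) (b : B) (x : Fin (n + 1) → S) (w : W),
      Linf (Cos (MulAction.stabilizer G sb)
        (restrictedFamily F (MulAction.stabilizer G sb))) :=
    fun sb g₀ b x w =>
      ⟨fun t => phi n ψ
          (σ (Subgroup.map (MulAction.stabilizer G sb).subtype (t.1 : Subgroup _))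
            (hHL sb t.1))
          (g₀ * (t.2.out : G)) b x w,
        C * K₀ * ‖b‖ * ‖w‖,
        fun t => phi_bound hW n ψ _ C K₀ hC0 hCψ (hσnorm _ _) hB _ b x w⟩
  have habs : ∀ (b : B) (x : Fin (n + 1) → S) (w : W),
      |m (rp (x 0)) (fcL (rp (x 0)) (tr (x 0)) b x w)| ≤ C * K₀ * ‖b‖ * ‖w‖ :=
    fun b x w => mean_abs_le _ (hm1 _) (hmpos _) _ _
      (fun t => phi_bound hW n ψ _ C K₀ hC0 hCψ (hσnorm _ _) hB _ b x w)
  have haddw : ∀ (b : B) (x : Fin (n + 1) → S) (w w' : W),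
      m (rp (x 0)) (fcL (rp (x 0)) (tr (x 0)) b x (w + w'))
        = m (rp (x 0)) (fcL (rp (x 0)) (tr (x 0)) b x w)
          + m (rp (x 0)) (fcL (rp (x 0)) (tr (x 0)) b x w') := by
    intro b x w w'
    have h : fcL (rp (x 0)) (tr (x 0)) b x (w + w')
        = fcL (rp (x 0)) (tr (x 0)) b x w + fcL (rp (x 0)) (tr (x 0)) b x w' := by
      apply Subtype.ext; funext t
      exact phi_add_w n ψ _ _ b x w w'
    rw [h, map_add]
  have hsmulw : ∀ (b : B) (x : Fin (n + 1) → S) (r : ℝ) (w : W),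
      m (rp (x 0)) (fcL (rp (x 0)) (tr (x 0)) b x (r • w))
        = r * m (rp (x 0)) (fcL (rp (x 0)) (tr (x 0)) b x w) := by
    intro b x r w
    have h : fcL (rp (x 0)) (tr (x 0)) b x (r • w)
        = r • fcL (rp (x 0)) (tr (x 0)) b x w := by
      apply Subtype.ext; funext t
      exact phi_smul_w n ψ _ _ b x r w
    rw [h, map_smul, smul_eq_mul]
  have haddb : ∀ (b b' : B) (x : Fin (n + 1) → S) (w : W),
      m (rp (x 0)) (fcL (rp (x 0)) (tr (x 0)) (b + b') x w)
        = m (rp (x 0)) (fcL (rp (x 0)) (tr (x 0)) b x w)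
          + m (rp (x 0)) (fcL (rp (x 0)) (tr (x 0)) b' x w) := by
    intro b b' x w
    have h : fcL (rp (x 0)) (tr (x 0)) (b + b') x w
        = fcL (rp (x 0)) (tr (x 0)) b x w + fcL (rp (x 0)) (tr (x 0)) b' x w := by
      apply Subtype.ext; funext t
      exact phi_add_b n ψ _ _ b b' x w
    rw [h, map_add]
  have hsmulb : ∀ (r : ℝ) (b : B) (x : Fin (n + 1) → S) (w : W),
      m (rp (x 0)) (fcL (rp (x 0)) (tr (x 0)) (r • b) x w)
        = r * m (rp (x 0)) (fcL (rp (x 0)) (tr (x 0)) b x w) := by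
    intro r b x w
    have h : fcL (rp (x 0)) (tr (x 0)) (r • b) x w
        = r • fcL (rp (x 0)) (tr (x 0)) b x w := by
      apply Subtype.ext; funext t
      exact phi_smul_b n ψ _ _ r b x w
    rw [h, map_smul, smul_eq_mul]
  have hsec : ∀ (a : A) (x : Fin (n + 1) → S) (w : W),
      m (rp (x 0)) (fcL (rp (x 0)) (tr (x 0)) (i a) x w) = ψ a x w := by
    intro a x w
    have h : fcL (rp (x 0)) (tr (x 0)) (i a) x w = constLinf _ (ψ a x w) := by
      apply Subtype.ext; funext t
      exact phi_i hW n ψ _ i hi (hσsec _ _) hψequiv _ a x w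
    rw [h, mean_const _ (hm1 _)]
  have hequiv : ∀ (g : G) (b : B) (x : Fin (n + 1) → S) (w : W),
      m (rp (x 0)) (fcL (rp (x 0)) (tr (x 0)) (g • b) x w)
        = m (rp (g⁻¹ • x 0)) (fcL (rp (g⁻¹ • x 0)) (tr (g⁻¹ • x 0)) b
            (fun j => g⁻¹ • x j) (g⁻¹ • w)) := by
    intro g b x w
    have hpt : rp (g⁻¹ • x 0) = rp (x 0) := hrps g⁻¹ (x 0)
    rw [hpt]
    set sb := rp (x 0) with hsb
    set g₁ := tr (x 0) with hg₁
    set g₂ := tr (g⁻¹ • x 0) with hg₂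
    have h₁ : g₁ • sb = x 0 := htr (x 0)
    have h₂ : g₂ • sb = g⁻¹ • x 0 := by
      have h := htr (g⁻¹ • x 0); rwa [hpt] at h
    have hcmem : (g₂⁻¹ * (g⁻¹ * g₁)) ∈ MulAction.stabilizer G sb := by
      rw [MulAction.mem_stabilizer_iff, mul_smul, mul_smul, h₁, ← h₂, inv_smul_smul]
    set cK : MulAction.stabilizer G sb := ⟨g₂⁻¹ * (g⁻¹ * g₁), hcmem⟩ with hcK
    have key : ∀ t : Cos (MulAction.stabilizer G sb)
        (restrictedFamily F (MulAction.stabilizer G sb)),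
        ((fcL sb g₁ (g • b) x w : _ → ℝ)) t
        = (fcL sb g₂ b (fun j => g⁻¹ • x j) (g⁻¹ • w) : _ → ℝ) (cK • t) := by
      rintro ⟨L, q⟩
      show phi n ψ (σ _ (hHL sb L)) (g₁ * (q.out : G)) (g • b) x w
        = phi n ψ (σ _ (hHL sb L)) (g₂ * ((cK • q).out : G)) b
            (fun j => g⁻¹ • x j) (g⁻¹ • w)
      have hl : ((cK * q.out)⁻¹ * (cK • q).out)
          ∈ (L : Subgroup (MulAction.stabilizer G sb)) := by
        rw [← QuotientGroup.eq, QuotientGroup.out_eq', ← smul_eq_mul]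
        exact MulAction.Quotient.mk_smul_out _ cK q
      have e1 : ((cK • q).out : G)
          = ((cK * q.out : MulAction.stabilizer G sb) : G)
            * (((cK * q.out)⁻¹ * (cK • q).out : MulAction.stabilizer G sb) : G) := by
        rw [← Subgroup.coe_mul, mul_inv_cancel_left]
      rw [e1, ← mul_assoc]
      have hmem : ((((cK * q.out)⁻¹ * (cK • q).out : MulAction.stabilizer G sb)) : G)
          ∈ Subgroup.map (MulAction.stabilizer G sb).subtype
            (L : Subgroup (MulAction.stabilizer G sb)) :=
        Subgroup.mem_map_of_mem (MulAction.stabilizer G sb).subtype hl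
      rw [phi_right hW n ψ (σ _ (hHL sb L)) hψequiv _ (hσequiv _ (hHL sb L))
        (g₂ * ((cK * q.out : MulAction.stabilizer G sb) : G))
        ((((cK * q.out)⁻¹ * (cK • q).out : MulAction.stabilizer G sb)) : G) hmem b _ _]
      have e2 : g₂ * ((cK * q.out : MulAction.stabilizer G sb) : G)
          = g⁻¹ * (g₁ * (q.out : G)) := by
        rw [Subgroup.coe_mul]
        show g₂ * ((g₂⁻¹ * (g⁻¹ * g₁)) * (q.out : G)) = g⁻¹ * (g₁ * (q.out : G))
        group
      have e3 := phi_conj n ψ (σ _ (hHL sb L)) g⁻¹ (g₁ * (q.out : G)) b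
        (fun j => g⁻¹ • x j) (g⁻¹ • w)
      rw [e2, e3, inv_inv]
      simp [smul_inv_smul]
    have hfe : fcL sb g₁ (g • b) x w
        = compL (fun t : Cos (MulAction.stabilizer G sb)
              (restrictedFamily F (MulAction.stabilizer G sb)) => cK • t)
            (fcL sb g₂ b (fun j => g⁻¹ • x j) (g⁻¹ • w)) := by
      apply Subtype.ext; funext t; exact key t
    rw [hfe]
    have h := hminv sb cK⁻¹ (fcL sb g₂ b (fun j => g⁻¹ • x j) (g⁻¹ • w))
    rw [inv_inv] at h
    exact h
  refine ⟨⟨⟨fun b x => LinearMap.mkContinuous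
      ⟨⟨fun w => m (rp (x 0)) (fcL (rp (x 0)) (tr (x 0)) b x w),
        fun w w' => haddw b x w w'⟩, fun r w => hsmulw b x r w⟩
      (C * K₀ * ‖b‖) (fun w => by simpa [Real.norm_eq_abs] using habs b x w),
      ?_⟩, ?_⟩, ⟨C * K₀, ?_⟩, ?_, ?_⟩
  · intro b b'
    funext x
    refine ContinuousLinearMap.ext fun w => ?_
    exact haddb b b' x w
  · intro r b
    funext x
    refine ContinuousLinearMap.ext fun w => ?_
    exact hsmulb r b x w
  · intro b x
    apply LinearMap.mkContinuous_norm_le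
    · exact mul_nonneg (mul_nonneg hC0 hK₀) (norm_nonneg b)
    · intro w
      simpa [Real.norm_eq_abs] using habs b x w
  · intro g b x
    refine ContinuousLinearMap.ext fun w => ?_
    exact hequiv g b x w
  · intro a
    funext x
    refine ContinuousLinearMap.ext fun w => ?_
    exact hsec a x w



end RelBdd
end
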